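/- Let f, g : U → ℝⁿ (U ⊆ ℝⁿ open) be differentiable maps such that at every coincidence point p ∈ Coin(f,g,U) the map dg_p - df_p is invertible, and suppose Coin(f,g,U) is compact. Then Coin(f,g,U) is a finite set. -/

import Mathlib

/-- A nondegenerate triple has finitely many coincidence points: if `f, g` are
differentiable on the open set `U`, `dg_p - df_p` is invertible at each coincidence
point, and the coincidence set is compact, then it is finite. -/
theorem nondegenerate_coincidence_finite (n : ℕ)
    (f g : (Fin n → ℝ) → (Fin n → ℝ)) (U : Set (Fin n → ℝ)) (hU : IsOpen U)
    (hf : ∀ x ∈ U, DifferentiableAt ℝ f x) (hg : ∀ x ∈ U, DifferentiableAt ℝ g x)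
    (hnd : ∀ p ∈ {x ∈ U | f x = g x},
      Function.Bijective (fderiv ℝ g p - fderiv ℝ f p))
    (hc : IsCompact {x ∈ U | f x = g x}) :
    {x ∈ U | f x = g x}.Finite := by
  set S := {x ∈ U | f x = g x} with hS
  have hdisc : DiscreteTopology S := by
    rw [discreteTopology_subtype_iff]
    intro p hp
    -- each coincidence point is isolated
    set L : (Fin n → ℝ) →L[ℝ] (Fin n → ℝ) := fderiv ℝ g p - fderiv ℝ f p with hL
    have hbij := hnd p hp
    let E : (Fin n → ℝ) ≃L[ℝ] (Fin n → ℝ) :=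
      (LinearEquiv.ofBijective (L : (Fin n → ℝ) →ₗ[ℝ] (Fin n → ℝ)) hbij).toContinuousLinearEquiv
    obtain ⟨K, hK⟩ : ∃ K : NNReal, AntilipschitzWith K E := ⟨_, E.antilipschitz⟩
    have hEL : ∀ v, E v = L v := fun v => rfl
    have hlow : ∀ v : Fin n → ℝ, ‖v‖ ≤ ((K : ℝ) + 1) * ‖L v‖ := by
      intro v
      have := hK.le_mul_dist v 0
      simp only [dist_zero_right, hEL, map_zero, dist_eq_norm, sub_zero] at this
      calc ‖v‖ ≤ (K : ℝ) * ‖L v‖ := by simpa using this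
        _ ≤ ((K : ℝ) + 1) * ‖L v‖ := by
            apply mul_le_mul_of_nonneg_right (by linarith) (norm_nonneg _)
    have hKpos : (0 : ℝ) < (K : ℝ) + 1 := by positivity
    -- derivative of g - f at p
    have hd : HasFDerivAt (fun x => g x - f x) L p :=
      ((hg p hp.1).hasFDerivAt.sub (hf p hp.1).hasFDerivAt)
    have hlo := hd.isLittleO
    have heps : (0 : ℝ) < (2 * ((K : ℝ) + 1))⁻¹ := by positivity
    have hev := hlo.bound heps
    rw [Filter.inf_principal_eq_bot]
    have hgp : g p - f p = 0 := by rw [hp.2]; simp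
    filter_upwards [eventually_nhdsWithin_of_eventually_nhds hev,
      self_mem_nhdsWithin] with x hx hxne
    intro hxS
    exfalso
    have hgx : g x - f x = 0 := by rw [hxS.2]; simp
    simp only [hgx, hgp, neg_zero, zero_sub, norm_neg] at hx
    have h1 : ‖x - p‖ ≤ ((K : ℝ) + 1) * ‖L (x - p)‖ := hlow _
    have h2 : ‖x - p‖ ≤ ((K : ℝ) + 1) * ((2 * ((K : ℝ) + 1))⁻¹ * ‖x - p‖) :=
      h1.trans (by apply mul_le_mul_of_nonneg_left hx hKpos.le)
    have h3 : ((K : ℝ) + 1) * ((2 * ((K : ℝ) + 1))⁻¹ * ‖x - p‖) = ‖x - p‖ / 2 := by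
      field_simp
    rw [h3] at h2
    have hxp : ‖x - p‖ = 0 := by linarith [norm_nonneg (x - p)]
    exact hxne (by rwa [norm_eq_zero, sub_eq_zero] at hxp)
  exact hc.finite (isDiscrete_iff_discreteTopology.mpr hdisc)
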